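/- Let γ : ℝ₊ → ℝ₊ be increasing convex with γ(0) = 0 and set r = sup_{x>0} x γ'₊(x)/γ(x), assumed finite. If γ^{1/r} is subadditive, then for any metric space (X, d) and any n, the map (x, y) ↦ (∑_{i=1}^n γ(d(xᵢ, yᵢ)))^{1/r} defines a metric on Xⁿ. -/

import Mathlib

open Set

lemma stmt9_r_ge_one (γ : ℝ → ℝ)
    (hconv : ConvexOn ℝ (Set.Ici 0) γ) (hγ0 : γ 0 = 0)
    (hpos : ∀ u : ℝ, 0 < u → 0 < γ u)
    (r : ℝ)
    (hr : IsLUB {q : ℝ | ∃ x : ℝ, 0 < x ∧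
        q = x * derivWithin γ (Set.Ioi x) x / γ x} r) : 1 ≤ r := by
  have h1 : (0:ℝ) < γ 1 := hpos 1 one_pos
  have h0m : (0:ℝ) ∈ Set.Ici (0:ℝ) := Set.mem_Ici.mpr (le_refl 0)
  have h1m : (1:ℝ) ∈ Set.Ici (0:ℝ) := Set.mem_Ici.mpr zero_le_one
  -- slopes through 1 are bounded below by γ 1 (the slope from 0 to 1)
  have hlb : ∀ y ∈ Set.Ioi (1:ℝ), γ 1 ≤ slope γ 1 y := by
    intro y hy
    have hym : y ∈ Set.Ici (0:ℝ) := Set.mem_Ici.mpr (le_of_lt (lt_trans one_pos hy))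
    have a2 := hconv.secant_mono_aux2 h0m hym one_pos hy
    have a3 := hconv.secant_mono_aux3 h0m hym one_pos hy
    rw [slope_def_field]
    simp only [hγ0, sub_zero] at a2 a3
    have hy1 : (0:ℝ) < y - 1 := by simpa using sub_pos.mpr (Set.mem_Ioi.mp hy)
    calc γ 1 = (γ 1)/1 := by norm_num
      _ ≤ γ y / y := a2
      _ ≤ (γ y - γ 1)/(y - 1) := a3
  have hbdd : BddBelow (slope γ 1 '' Set.Ioi 1) := by
    refine ⟨γ 1, ?_⟩
    rintro q ⟨y, hy, rfl⟩
    exact hlb y hy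
  have hmonoS : MonotoneOn (slope γ 1) (Set.Ioi 1) := by
    intro a ha b hb hab
    rw [slope_def_field, slope_def_field]
    exact hconv.secant_mono h1m (Set.mem_Ici.mpr (le_of_lt (lt_trans one_pos ha)))
      (Set.mem_Ici.mpr (le_of_lt (lt_trans one_pos hb))) (ne_of_gt ha) (ne_of_gt hb) hab
  set d : ℝ := sInf (slope γ 1 '' Set.Ioi 1) with hd
  have htend : Filter.Tendsto (slope γ 1) (nhdsWithin 1 (Set.Ioi 1)) (nhds d) :=
    hmonoS.tendsto_nhdsGT hbdd
  have hder : HasDerivWithinAt γ d (Set.Ioi 1) 1 := by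
    rw [hasDerivWithinAt_iff_tendsto_slope' (by simp : (1:ℝ) ∉ Set.Ioi 1)]
    exact htend
  have hdw : derivWithin γ (Set.Ioi 1) 1 = d :=
    hder.derivWithin (uniqueDiffWithinAt_Ioi 1)
  have hdge : γ 1 ≤ d := by
    refine le_csInf ⟨slope γ 1 2, ⟨2, by norm_num, rfl⟩⟩ ?_
    rintro q ⟨y, hy, rfl⟩
    exact hlb y hy
  have hmem : (1:ℝ) * derivWithin γ (Set.Ioi 1) 1 / γ 1 ∈
      {q : ℝ | ∃ x : ℝ, 0 < x ∧ q = x * derivWithin γ (Set.Ioi x) x / γ x} :=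
    ⟨1, one_pos, rfl⟩
  have := hr.1 hmem
  rw [hdw, one_mul] at this
  have : 1 ≤ d / γ 1 := (one_le_div₀ h1).mpr hdge
  linarith [hr.1 hmem, hdw ▸ (le_div_iff₀ h1).mp this]

/-- Let `γ : ℝ₊ → ℝ₊` be increasing convex, `γ(0) = 0`, `γ > 0`
on `(0,∞)`, and let `r = sup_{x>0} x γ'₊(x)/γ(x)` be finite. If `γ^{1/r}` is
subadditive then for any metric space `X` and any `n`, the map
`(x,y) ↦ (∑ᵢ γ(d(xᵢ,yᵢ)))^{1/r}` is a metric on `Xⁿ` (it vanishes exactly on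
the diagonal, is symmetric, and satisfies the triangle inequality). -/
theorem stmt_9 (γ : ℝ → ℝ) (hmono : MonotoneOn γ (Set.Ici 0))
    (hconv : ConvexOn ℝ (Set.Ici 0) γ) (hγ0 : γ 0 = 0)
    (hpos : ∀ u : ℝ, 0 < u → 0 < γ u)
    (r : ℝ)
    (hr : IsLUB {q : ℝ | ∃ x : ℝ, 0 < x ∧
        q = x * derivWithin γ (Set.Ioi x) x / γ x} r)
    (hsub : ∀ u v : ℝ, 0 ≤ u → 0 ≤ v →
      γ (u + v) ^ (1 / r) ≤ γ u ^ (1 / r) + γ v ^ (1 / r))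
    {X : Type*} [MetricSpace X] (n : ℕ) :
    ∀ x y z : Fin n → X,
      ((∑ i, γ (dist (x i) (y i))) ^ (1 / r) = 0 ↔ x = y) ∧
      (∑ i, γ (dist (x i) (y i))) ^ (1 / r) =
        (∑ i, γ (dist (y i) (x i))) ^ (1 / r) ∧
      (∑ i, γ (dist (x i) (z i))) ^ (1 / r) ≤
        (∑ i, γ (dist (x i) (y i))) ^ (1 / r) +
          (∑ i, γ (dist (y i) (z i))) ^ (1 / r) := by
  intro x y z
  have hr1 : 1 ≤ r := stmt9_r_ge_one γ hconv hγ0 hpos r hr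
  have hrpos : (0:ℝ) < r := lt_of_lt_of_le one_pos hr1
  have hire : (0:ℝ) < 1 / r := by positivity
  have hγnn : ∀ u : ℝ, 0 ≤ u → 0 ≤ γ u := by
    intro u hu
    rcases eq_or_lt_of_le hu with h | h
    · simp [← h, hγ0]
    · exact (hpos u h).le
  have hsum_nn : ∀ a b : Fin n → X, 0 ≤ ∑ i, γ (dist (a i) (b i)) :=
    fun a b => Finset.sum_nonneg fun i _ => hγnn _ dist_nonneg
  have hinv : ∀ t : ℝ, 0 ≤ t → (t ^ (1/r)) ^ r = t := by
    intro t ht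
    rw [← Real.rpow_mul ht, one_div, inv_mul_cancel₀ (ne_of_gt hrpos), Real.rpow_one]
  refine ⟨?_, ?_, ?_⟩
  · rw [Real.rpow_eq_zero (hsum_nn x y) (ne_of_gt hire)]
    constructor
    · intro h
      funext i
      have hterm := (Finset.sum_eq_zero_iff_of_nonneg
        (fun i _ => hγnn _ dist_nonneg)).mp h i (Finset.mem_univ i)
      have hd0 : dist (x i) (y i) = 0 := by
        by_contra hne
        exact absurd hterm
          (ne_of_gt (hpos _ (lt_of_le_of_ne dist_nonneg (Ne.symm hne))))
      exact dist_eq_zero.mp hd0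
    · rintro rfl
      simp [hγ0]
  · simp [dist_comm]
  · set f : Fin n → ℝ := fun i => γ (dist (x i) (y i)) ^ (1/r) with hf
    set g : Fin n → ℝ := fun i => γ (dist (y i) (z i)) ^ (1/r) with hg
    have hfnn : ∀ i, 0 ≤ f i := fun i =>
      Real.rpow_nonneg (hγnn _ dist_nonneg) _
    have hgnn : ∀ i, 0 ≤ g i := fun i =>
      Real.rpow_nonneg (hγnn _ dist_nonneg) _
    have key : ∀ i, γ (dist (x i) (z i)) ≤ |f i + g i| ^ r := by
      intro i
      have h1 : γ (dist (x i) (z i)) ≤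
          γ (dist (x i) (y i) + dist (y i) (z i)) :=
        hmono (Set.mem_Ici.mpr dist_nonneg)
          (Set.mem_Ici.mpr (by positivity)) (dist_triangle _ _ _)
      have h2 := hsub _ _ (dist_nonneg (x := x i) (y := y i))
        (dist_nonneg (x := y i) (y := z i))
      have habs : |f i + g i| = f i + g i :=
        abs_of_nonneg (add_nonneg (hfnn i) (hgnn i))
      calc γ (dist (x i) (z i))
          ≤ γ (dist (x i) (y i) + dist (y i) (z i)) := h1
        _ = (γ (dist (x i) (y i) + dist (y i) (z i)) ^ (1/r)) ^ r :=
            (hinv _ (hγnn _ (by positivity))).symm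
        _ ≤ (f i + g i) ^ r :=
            Real.rpow_le_rpow (Real.rpow_nonneg (hγnn _ (by positivity)) _)
              h2 hrpos.le
        _ = |f i + g i| ^ r := by rw [habs]
    have habs2 : ∀ i, |f i| ^ r = γ (dist (x i) (y i)) := fun i => by
      rw [abs_of_nonneg (hfnn i)]; exact hinv _ (hγnn _ dist_nonneg)
    have habs3 : ∀ i, |g i| ^ r = γ (dist (y i) (z i)) := fun i => by
      rw [abs_of_nonneg (hgnn i)]; exact hinv _ (hγnn _ dist_nonneg)
    calc (∑ i, γ (dist (x i) (z i))) ^ (1/r)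
        ≤ (∑ i, |f i + g i| ^ r) ^ (1/r) :=
          Real.rpow_le_rpow (hsum_nn x z)
            (Finset.sum_le_sum fun i _ => key i) hire.le
      _ ≤ (∑ i, |f i| ^ r) ^ (1/r) + (∑ i, |g i| ^ r) ^ (1/r) :=
          Real.Lp_add_le Finset.univ f g hr1
      _ = (∑ i, γ (dist (x i) (y i))) ^ (1/r) +
            (∑ i, γ (dist (y i) (z i))) ^ (1/r) := by
          simp only [habs2, habs3]
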